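/- Let G be a finite simple graph such that every connected induced subgraph of G has a universal vertex (a vertex adjacent to all others in that subgraph). Then G is perfect; in fact χ(H) = ω(H) for every induced subgraph H of G. -/

import Mathlib

open SimpleGraph Finset

section aux

variable {V : Type*} [Fintype V] [DecidableEq V]

set_option linter.unusedSectionVars false in
/-- Clique number is monotone under induced subgraph inclusion (for finsets). -/
lemma cliqueNum_induce_mono (G : SimpleGraph V) {A s : Finset V} (hAs : A ⊆ s) :
    (G.induce (A : Set V)).cliqueNum ≤ (G.induce (s : Set V)).cliqueNum := by
  classical
  obtain ⟨c, hc⟩ := (G.induce (A : Set V)).exists_isNClique_cliqueNum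
  have hsub : (A : Set V) ⊆ (s : Set V) := by exact_mod_cast hAs
  let f : (A : Set V) ↪ (s : Set V) :=
    ⟨Set.inclusion hsub, Set.inclusion_injective hsub⟩
  have hclique : (G.induce (s : Set V)).IsClique (c.map f : Finset (s : Set V)) := by
    intro u hu w hw hne
    simp only [coe_map, Set.mem_image, mem_coe] at hu hw
    obtain ⟨u', hu', rfl⟩ := hu
    obtain ⟨w', hw', rfl⟩ := hw
    have hne' : u' ≠ w' := by
      intro hEq; exact hne (by rw [hEq])
    exact hc.isClique hu' hw' hne'
  have := hclique.card_le_cliqueNum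
  rwa [Finset.card_map, hc.card_eq] at this

end aux

/-- If every connected induced subgraph of a finite simple graph `G` has a universal
vertex, then `G` is perfect: `χ(H) = ω(H)` for every induced subgraph `H` of `G`. -/
theorem perfect_of_universal_vertices {V : Type*} [Fintype V] [DecidableEq V]
    (G : SimpleGraph V)
    (h : ∀ s : Finset V, (G.induce (s : Set V)).Connected →
      ∃ v : (s : Set V), ∀ w : (s : Set V), w ≠ v → (G.induce (s : Set V)).Adj v w) :
    ∀ s : Finset V,
      (G.induce (s : Set V)).chromaticNumber = ((G.induce (s : Set V)).cliqueNum : ℕ∞) := by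
  classical
  have key : ∀ s : Finset V,
      (G.induce (s : Set V)).Colorable (G.induce (s : Set V)).cliqueNum := by
    intro s
    induction s using Finset.strongInduction with
    | _ s ih =>
      by_cases hne : s = ∅
      · subst hne
        have : IsEmpty ((∅ : Finset V) : Set V) := ⟨fun x => by simpa using x.2⟩
        exact Colorable.of_isEmpty _
      by_cases hconn : (G.induce (s : Set V)).Connected
      · -- connected case: use the universal vertex
        obtain ⟨v, hv⟩ := h s hconn
        have hvs : v.val ∈ s := by exact_mod_cast v.2
        set t : Finset V := s.erase v.val with ht
        have hts : t ⊂ s := Finset.erase_ssubset hvs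
        have hmemt : ∀ w : (s : Set V), w.val ≠ v.val → w.val ∈ (t : Set V) := by
          intro w hw
          simp only [ht, coe_erase, Set.mem_diff, Set.mem_singleton_iff]
          exact ⟨w.2, hw⟩
        obtain ⟨Ct⟩ := ih t hts
        set n : ℕ := (G.induce (t : Set V)).cliqueNum with hn
        -- extend the coloring with a fresh color for v
        have hcol : (G.induce (s : Set V)).Colorable (n + 1) := by
          refine ⟨Coloring.mk (fun w =>
            if hw : w.val = v.val then Fin.last n
            else (Ct ⟨w.val, hmemt w hw⟩).castSucc) ?_⟩
          intro a b hadj hEq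
          have hab : G.Adj a.val b.val := hadj
          by_cases ha : a.val = v.val <;> by_cases hb : b.val = v.val
          · exact G.irrefl (by rw [ha, ← hb] at hab; exact hab)
          · simp only [ha, hb, dif_pos, dif_neg, not_false_iff] at hEq
            exact (Fin.castSucc_lt_last _).ne' hEq
          · simp only [ha, hb, dif_pos, dif_neg, not_false_iff] at hEq
            exact (Fin.castSucc_lt_last _).ne hEq
          · simp only [ha, hb, dif_neg, not_false_iff] at hEq
            have hEq' := Fin.castSucc_injective _ hEq
            have hadj' : (G.induce (t : Set V)).Adj
                ⟨a.val, hmemt a ha⟩ ⟨b.val, hmemt b hb⟩ := hab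
            exact Ct.valid hadj' hEq'
        -- clique number goes up by one
        have hle : n + 1 ≤ (G.induce (s : Set V)).cliqueNum := by
          obtain ⟨c, hc⟩ := (G.induce (t : Set V)).exists_isNClique_cliqueNum
          have hsub : (t : Set V) ⊆ (s : Set V) := by
            exact_mod_cast Finset.erase_subset _ _
          let f : (t : Set V) ↪ (s : Set V) :=
            ⟨Set.inclusion hsub, Set.inclusion_injective hsub⟩
          have hvnot : v ∉ c.map f := by
            intro hmem
            simp only [Finset.mem_map] at hmem
            obtain ⟨u, hu, hEq⟩ := hmem
            have : u.val = v.val := congrArg Subtype.val hEq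
            have hu2 : u.val ∈ t := by exact_mod_cast u.2
            exact (Finset.mem_erase.mp hu2).1 this
          have hclique : (G.induce (s : Set V)).IsClique
              (insert v (c.map f) : Finset (s : Set V)) := by
            intro a ha b hb hab
            simp only [coe_insert, Set.mem_insert_iff, coe_map, Set.mem_image,
              mem_coe] at ha hb
            rcases ha with rfl | ⟨a', ha', rfl⟩
            · rcases hb with rfl | ⟨b', hb', rfl⟩
              · exact absurd rfl hab
              · exact ((hv _ (Ne.symm hab)).symm).symm
            · rcases hb with rfl | ⟨b', hb', rfl⟩
              · exact (hv _ hab).symm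
              · have : a' ≠ b' := by intro hEq; exact hab (by rw [hEq])
                exact hc.isClique ha' hb' this
          have := hclique.card_le_cliqueNum
          rwa [Finset.card_insert_of_notMem hvnot, Finset.card_map, hc.card_eq] at this
        exact hcol.mono hle
      · -- disconnected case
        obtain ⟨x, hx⟩ := Finset.nonempty_of_ne_empty hne
        have hxs : x ∈ (s : Set V) := by exact_mod_cast hx
        set xs : (s : Set V) := ⟨x, hxs⟩ with hxs'
        set A : Finset V := s.filter
          (fun y => ∃ hy : y ∈ (s : Set V), (G.induce (s : Set V)).Reachable xs ⟨y, hy⟩)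
          with hA
        have hAs : A ⊆ s := Finset.filter_subset _ _
        have hxA : x ∈ A := by
          rw [hA, Finset.mem_filter]
          exact ⟨hx, hxs, Reachable.refl _⟩
        have hBne : ∃ y ∈ s, y ∉ A := by
          by_contra hcon
          push_neg at hcon
          apply hconn
          rw [connected_iff]
          refine ⟨?_, ⟨xs⟩⟩
          · intro u w
            have hu : u.val ∈ A := hcon u.val (by exact_mod_cast u.2)
            have hw : w.val ∈ A := hcon w.val (by exact_mod_cast w.2)
            rw [hA, Finset.mem_filter] at hu hw
            obtain ⟨_, hu1, hu2⟩ := hu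
            obtain ⟨_, hw1, hw2⟩ := hw
            exact (hu2.symm.trans hw2 : _)
        obtain ⟨y, hys, hyA⟩ := hBne
        set B : Finset V := s \ A with hB
        have hBs : B ⊆ s := Finset.sdiff_subset
        have hyB : y ∈ B := Finset.mem_sdiff.mpr ⟨hys, hyA⟩
        have hAss : A ⊂ s := ⟨hAs, fun hcon => hyA (hcon hys)⟩
        have hBss : B ⊂ s := ⟨hBs, fun hcon => (Finset.mem_sdiff.mp (hcon hx)).2 hxA⟩
        obtain ⟨CA⟩ := ih A hAss
        obtain ⟨CB⟩ := ih B hBss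
        set nA : ℕ := (G.induce (A : Set V)).cliqueNum with hnA
        set nB : ℕ := (G.induce (B : Set V)).cliqueNum with hnB
        -- no edges between A and B
        have cross : ∀ a ∈ A, ∀ b ∈ B, ¬ G.Adj a b := by
          intro a haA b hbB hadj
          have hbs : b ∈ s := (Finset.mem_sdiff.mp hbB).1
          have hbA : b ∈ A := by
            rw [hA, Finset.mem_filter]
            rw [hA, Finset.mem_filter] at haA
            obtain ⟨has, has', hreach⟩ := haA
            refine ⟨hbs, by exact_mod_cast hbs, ?_⟩
            have hadj' : (G.induce (s : Set V)).Adj ⟨a, has'⟩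
                ⟨b, by exact_mod_cast hbs⟩ := hadj
            exact hreach.trans hadj'.reachable
          exact (Finset.mem_sdiff.mp hbB).2 hbA
        have hcol : (G.induce (s : Set V)).Colorable (max nA nB) := by
          refine ⟨Coloring.mk (fun w =>
            if hw : w.val ∈ A then
              Fin.castLE (le_max_left nA nB) (CA ⟨w.val, by exact_mod_cast hw⟩)
            else
              Fin.castLE (le_max_right nA nB) (CB ⟨w.val, by
                have : w.val ∈ B := Finset.mem_sdiff.mpr ⟨by exact_mod_cast w.2, hw⟩
                exact_mod_cast this⟩)) ?_⟩
          intro a b hadj hEq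
          have hab : G.Adj a.val b.val := hadj
          by_cases ha : a.val ∈ A <;> by_cases hb : b.val ∈ A
          · simp only [ha, hb, dif_pos] at hEq
            have hEq' := Fin.castLE_injective (le_max_left nA nB) hEq
            have hadj' : (G.induce (A : Set V)).Adj ⟨a.val, by exact_mod_cast ha⟩
                ⟨b.val, by exact_mod_cast hb⟩ := hab
            exact CA.valid hadj' hEq'
          · exact cross a.val ha b.val
              (Finset.mem_sdiff.mpr ⟨by exact_mod_cast b.2, hb⟩) hab
          · exact cross b.val hb a.val
              (Finset.mem_sdiff.mpr ⟨by exact_mod_cast a.2, ha⟩) hab.symm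
          · simp only [ha, hb, dif_neg, not_false_iff] at hEq
            have hEq' := Fin.castLE_injective (le_max_right nA nB) hEq
            have hadj' : (G.induce (B : Set V)).Adj
                ⟨a.val, by
                  have : a.val ∈ B := Finset.mem_sdiff.mpr ⟨by exact_mod_cast a.2, ha⟩
                  exact_mod_cast this⟩
                ⟨b.val, by
                  have : b.val ∈ B := Finset.mem_sdiff.mpr ⟨by exact_mod_cast b.2, hb⟩
                  exact_mod_cast this⟩ := hab
            exact CB.valid hadj' hEq'
        have hle : max nA nB ≤ (G.induce (s : Set V)).cliqueNum :=
          max_le (cliqueNum_induce_mono G hAs) (cliqueNum_induce_mono G hBs)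
        exact hcol.mono hle
  intro s
  refine le_antisymm ((key s).chromaticNumber_le) ?_
  obtain ⟨c, hc⟩ := (G.induce (s : Set V)).exists_isNClique_cliqueNum
  have := hc.isClique.card_le_chromaticNumber
  rwa [hc.card_eq] at this
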